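/- arXiv:1309.5420 — 2 statements merged into one kernel-verified Lean document; each statement's English description precedes it below -/
import Mathlib

section
/- For each k ≥ 0, there is an isomorphism of abelian groups G_k/G_{k+1} ≅ ∏_{i=0}^{k} (J(R)^i / J(R)^{i+1}) x̄^{k−i}, i.e., the k-th graded piece of the filtered ring S = R[[x; σ, δ]] decomposes as a finite product of graded pieces of the J(R)-adic filtration of R. -/
universe u

/-- An abstract presentation of the skew power series ring `S = R[[x; σ, δ]]`:
a ring `S` whose underlying additive group is that of all formal power series
`∑ aᵢ xⁱ` with coefficients in `R` (encoded by the additive isomorphism `coeff`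
with the product `ℕ → R`), in which the multiplication satisfies
`x · r = σ(r) · x + δ(r)` and behaves as expected on coefficients for
left multiplication by scalars and by `x`, and for right multiplication by `x`. -/
structure SkewPowerSeriesRing (R : Type u) [Ring R] (σ : R →+* R) (δ : R →+ R) :
    Type (u + 1) where
  S : Type u
  [ringS : Ring S]
  /-- the canonical embedding `R → S` -/
  ι : R →+* S
  ι_injective : Function.Injective ι
  /-- the variable `x` -/
  X : S
  /-- the coefficient extraction: `S ≅ ∏_{i ≥ 0} R xⁱ` as additive groups -/
  coeff : S ≃+ (ℕ → R)
  coeff_ι : ∀ (r : R) (n : ℕ), coeff (ι r) n = if n = 0 then r else 0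
  coeff_X : ∀ n : ℕ, coeff X n = if n = 1 then 1 else 0
  coeff_ι_mul : ∀ (r : R) (f : S) (n : ℕ), coeff (ι r * f) n = r * coeff f n
  coeff_mul_X : ∀ (f : S) (n : ℕ),
    coeff (f * X) n = if n = 0 then 0 else coeff f (n - 1)
  X_mul_ι : ∀ r : R, X * ι r = ι (σ r) * X + ι (δ r)
  coeff_X_mul : ∀ (f : S) (n : ℕ),
    coeff (X * f) n = δ (coeff f n) + if n = 0 then 0 else σ (coeff f (n - 1))

attribute [instance] SkewPowerSeriesRing.ringS

variable {R : Type u} [Ring R] {σ : R →+* R} {δ : R →+ R}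

/-- The Jacobson radical `J(R)` (the Jacobson radical of the zero ideal). -/
def jacobsonRadical (R : Type u) [Ring R] : Ideal R := Ideal.jacobson (⊥ : Ideal R)

/-- The filtration `G_k = ∏_{i ≥ 0} J(R)^{k-i} xⁱ` of `S = R[[x; σ, δ]]`
(with the convention `J(R)^m = R` for `m ≤ 0`, via truncated subtraction). -/
def SkewPowerSeriesRing.G (W : SkewPowerSeriesRing R σ δ) (k : ℕ) : AddSubgroup W.S where
  carrier := {f : W.S | ∀ i : ℕ, W.coeff f i ∈ jacobsonRadical R ^ (k - i)}
  zero_mem' := by intro i; simp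
  add_mem' := by
    intro f g hf hg i
    rw [map_add]
    exact add_mem (hf i) (hg i)
  neg_mem' := by
    intro f hf i
    rw [map_neg]
    exact neg_mem (hf i)

/-- The monomial in `δ` and `σ` determined by a list of booleans
(`true` stands for a factor `δ`, `false` for a factor `σ`). -/
def monomialMap (σ δ : R → R) (l : List Bool) : R → R :=
  (l.map fun b => if b then δ else σ).foldr (· ∘ ·) id

/-- `δ` is `σ`-nilpotent with respect to the ideal `I`. -/
def SigmaNilpotent (σ δ : R → R) (I : Ideal R) : Prop :=
  ∀ n : ℕ, 1 ≤ n → ∃ m : ℕ, 1 ≤ m ∧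
    ∀ l : List Bool, m ≤ l.count true → ∀ r : R, monomialMap σ δ l r ∈ I ^ n

private lemma mem_pow_zero {R : Type u} [Ring R] (I : Ideal R) (r : R) : r ∈ I ^ 0 := by
  rw [Submodule.pow_zero, Submodule.one_eq_span]
  have h : r = r • (1 : R) := by simp
  rw [h]
  exact Submodule.smul_mem _ _ (Submodule.subset_span rfl)

/-- for each `k ≥ 0` there is an isomorphism of abelian groups
`G_k/G_{k+1} ≅ ∏_{i=0}^{k} (J(R)^i / J(R)^{i+1}) x̄^{k-i}`. -/
theorem graded_piece_decomposition (R : Type u) [Ring R] (σ : R →+* R) (δ : R →+ R)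
    (W : SkewPowerSeriesRing R σ δ)
    (hσbij : Function.Bijective σ)
    (hσJ : σ '' (jacobsonRadical R : Set R) = (jacobsonRadical R : Set R))
    (hδ : ∀ a b : R, δ (a * b) = σ a * δ b + δ a * b)
    (hδnil : SigmaNilpotent (σ : R → R) (δ : R → R) (jacobsonRadical R))
    (hδR : ∀ r : R, δ r ∈ jacobsonRadical R)
    (k : ℕ) :
    Nonempty
      ((W.G k ⧸ (W.G (k + 1)).addSubgroupOf (W.G k)) ≃+
        ∀ i : Fin (k + 1),
          ((jacobsonRadical R ^ (i : ℕ)).toAddSubgroup ⧸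
            ((jacobsonRadical R ^ ((i : ℕ) + 1)).toAddSubgroup.addSubgroupOf
              (jacobsonRadical R ^ (i : ℕ)).toAddSubgroup))) := by
  classical
  let J := jacobsonRadical R
  let φ : W.G k →+ (∀ i : Fin (k + 1),
      ((jacobsonRadical R ^ (i : ℕ)).toAddSubgroup ⧸
        ((jacobsonRadical R ^ ((i : ℕ) + 1)).toAddSubgroup.addSubgroupOf
          (jacobsonRadical R ^ (i : ℕ)).toAddSubgroup))) :=
  { toFun := fun f i => QuotientAddGroup.mk ⟨W.coeff f.1 (k - (i : ℕ)), by
      have h := f.2 (k - (i : ℕ))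
      rwa [Nat.sub_sub_self (Nat.lt_succ_iff.mp i.2)] at h⟩
    map_zero' := by
      funext i
      have h0 : ((0 : W.G k) : W.S) = 0 := rfl
      simp only [h0, map_zero]
      rfl
    map_add' := by
      intro f g
      funext i
      have hadd : ((f + g : W.G k) : W.S) = (f : W.S) + (g : W.S) := rfl
      simp only [hadd, map_add]
      rfl }
  have hφ : ∀ (f : W.G k) (i : Fin (k + 1)), φ f i = QuotientAddGroup.mk
      ⟨W.coeff f.1 (k - (i : ℕ)), by
        have h := f.2 (k - (i : ℕ))
        rwa [Nat.sub_sub_self (Nat.lt_succ_iff.mp i.2)] at h⟩ := fun f i => rfl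
  have hker : φ.ker = (W.G (k + 1)).addSubgroupOf (W.G k) := by
    ext f
    simp only [AddMonoidHom.mem_ker, AddSubgroup.mem_addSubgroupOf]
    constructor
    · intro hf j
      by_cases hj : j ≤ k
      · have h2 := congrFun hf ⟨k - j, by omega⟩
        rw [hφ, Pi.zero_apply, QuotientAddGroup.eq_zero_iff] at h2
        rw [AddSubgroup.mem_addSubgroupOf] at h2
        have h3 : W.coeff (f : W.S) (k - (k - j)) ∈ jacobsonRadical R ^ ((k - j) + 1) := h2
        rw [Nat.sub_sub_self hj] at h3
        have heq : k - j + 1 = k + 1 - j := by omega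
        rwa [heq] at h3
      · have h0 : k + 1 - j = 0 := by omega
        rw [h0]
        exact mem_pow_zero _ _
    · intro hf
      funext i
      rw [hφ, Pi.zero_apply, QuotientAddGroup.eq_zero_iff, AddSubgroup.mem_addSubgroupOf]
      have := hf (k - (i : ℕ))
      have hi : (i : ℕ) ≤ k := Nat.lt_succ_iff.mp i.2
      have heq : k + 1 - (k - (i : ℕ)) = (i : ℕ) + 1 := by omega
      rw [heq] at this
      exact this
  have hsurj : Function.Surjective φ := by
    intro y
    choose r hr using fun i => QuotientAddGroup.mk_surjective (y i)
    let g : ℕ → R := fun j => if hj : j ≤ k then (r ⟨k - j, by omega⟩ : R) else 0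
    have hg : ∀ j, g j ∈ jacobsonRadical R ^ (k - j) := by
      intro j
      by_cases hj : j ≤ k
      · simp only [g, dif_pos hj]
        have := (r ⟨k - j, by omega⟩).2
        simpa using this
      · simp only [g, dif_neg hj]
        exact zero_mem _
    refine ⟨⟨W.coeff.symm g, fun j => by simpa using hg j⟩, ?_⟩
    funext i
    rw [hφ, ← hr i]
    congr 1
    ext
    show W.coeff (W.coeff.symm g) (k - (i : ℕ)) = (r i : R)
    rw [AddEquiv.apply_symm_apply]
    have hi : (i : ℕ) ≤ k := Nat.lt_succ_iff.mp i.2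
    have hle : k - (i : ℕ) ≤ k := by omega
    have hfin : (⟨k - (k - (i : ℕ)), by omega⟩ : Fin (k + 1)) = i :=
      Fin.ext (by simp [Nat.sub_sub_self hi])
    simp only [g, dif_pos hle]
    exact congrArg (fun j : Fin (k + 1) => ((r j : R))) hfin
  exact ⟨(QuotientAddGroup.quotientAddEquivOfEq hker.symm).trans
    (QuotientAddGroup.quotientKerEquivOfSurjective φ hsurj)⟩
end

section
/- If R is a filtered ring whose associated graded ring Gr(R) is left Noetherian, and the filtration is complete, then R is left Noetherian. -/
universe u

/-- A bundled finitely generated projective left module over `R`. -/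
structure FGProj (R : Type u) [Ring R] : Type (u + 1) where
  carrier : Type u
  [isAddCommGroup : AddCommGroup carrier]
  [isModule : Module R carrier]
  [isFinite : Module.Finite R carrier]
  [isProjective : Module.Projective R carrier]

attribute [instance] FGProj.isAddCommGroup FGProj.isModule FGProj.isFinite FGProj.isProjective

/-- `A` is left regular: every finitely generated left `A`-module admits a finite
resolution by finitely generated projective left `A`-modules. -/
def IsLeftRegularRing (A : Type u) [Ring A] : Prop :=
  ∀ (M : Type u) [AddCommGroup M] [Module A M] [Module.Finite A M],
    ∃ (n : ℕ) (P : ℕ → FGProj A) (d : ∀ i : ℕ, (P (i + 1)).carrier →ₗ[A] (P i).carrier)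
      (ε : (P 0).carrier →ₗ[A] M),
      (∀ i, n < i → Subsingleton (P i).carrier) ∧
      Function.Surjective ε ∧ Function.Exact (d 0) ε ∧
      ∀ i : ℕ, Function.Exact (d (i + 1)) (d i)

/-- `B` is (a realization of) the associated graded ring `Gr(R) = ⊕ₖ F k / F (k+1)` of the
decreasingly filtered ring `R`: the maps `π k : F k → B` are the principal-symbol maps onto
the homogeneous components, with kernel `F (k+1)`, multiplicative in the graded sense,
jointly spanning `B`, and with independent images. -/
structure IsAssociatedGraded (R : Type u) [Ring R] (F : ℕ → AddSubgroup R)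
    (B : Type u) [Ring B] where
  π : ∀ k : ℕ, F k →+ B
  π_ker : ∀ (k : ℕ) (x : F k), π k x = 0 ↔ (x : R) ∈ F (k + 1)
  π_one : ∀ h : (1 : R) ∈ F 0, π 0 ⟨1, h⟩ = 1
  π_mul : ∀ (k l : ℕ) (x : F k) (y : F l) (h : (x : R) * (y : R) ∈ F (k + l)),
    π k x * π l y = π (k + l) ⟨(x : R) * (y : R), h⟩
  indep : ∀ (n : ℕ) (f : ∀ k : ℕ, F k),
    (∑ k ∈ Finset.range n, π k (f k)) = 0 → ∀ k < n, π k (f k) = 0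
  span : AddSubgroup.closure (⋃ k : ℕ, Set.range (π k)) = (⊤ : AddSubgroup B)

section aux

variable {R : Type u} [Ring R] {F : ℕ → AddSubgroup R} {B : Type u} [Ring B]

open Classical in
/-- Total symbol map on `R`. -/
noncomputable def symb (gr : IsAssociatedGraded R F B) (k : ℕ) (r : R) : B :=
  if h : r ∈ F k then gr.π k ⟨r, h⟩ else 0

variable (gr : IsAssociatedGraded R F B)

lemma symb_of_mem {k : ℕ} {r : R} (h : r ∈ F k) : symb gr k r = gr.π k ⟨r, h⟩ := by
  unfold symb
  rw [dif_pos h]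

lemma symb_zero (k : ℕ) : symb gr k (0 : R) = 0 := by
  rw [symb_of_mem gr (zero_mem _)]
  exact map_zero _

lemma symb_add {k : ℕ} {r s : R} (hr : r ∈ F k) (hs : s ∈ F k) :
    symb gr k (r + s) = symb gr k r + symb gr k s := by
  rw [symb_of_mem gr (add_mem hr hs), symb_of_mem gr hr, symb_of_mem gr hs, ← map_add]
  rfl

lemma symb_neg {k : ℕ} {r : R} (hr : r ∈ F k) : symb gr k (-r) = - symb gr k r := by
  rw [symb_of_mem gr (neg_mem hr), symb_of_mem gr hr, ← map_neg]
  rfl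

lemma symb_sub {k : ℕ} {r s : R} (hr : r ∈ F k) (hs : s ∈ F k) :
    symb gr k (r - s) = symb gr k r - symb gr k s := by
  rw [sub_eq_add_neg, symb_add gr hr (neg_mem hs), symb_neg gr hs, sub_eq_add_neg]

lemma symb_sum {α : Type*} (t : Finset α) (w : α → R) (k : ℕ) (hw : ∀ j ∈ t, w j ∈ F k) :
    symb gr k (∑ j ∈ t, w j) = ∑ j ∈ t, symb gr k (w j) := by
  classical
  induction t using Finset.cons_induction with
  | empty => simp [symb_zero gr]
  | cons a t ha ih =>
    rw [Finset.sum_cons, Finset.sum_cons,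
      symb_add gr (hw a (Finset.mem_cons_self a t))
        (sum_mem fun j hj => hw j (Finset.mem_cons_of_mem hj)),
      ih (fun j hj => hw j (Finset.mem_cons_of_mem hj))]

lemma symb_eq_zero_iff {k : ℕ} {r : R} (h : r ∈ F k) :
    symb gr k r = 0 ↔ r ∈ F (k + 1) := by
  rw [symb_of_mem gr h]
  exact gr.π_ker k ⟨r, h⟩

lemma symb_mul {k l : ℕ} {r s : R} (hr : r ∈ F k) (hs : s ∈ F l) (hrs : r * s ∈ F (k + l)) :
    symb gr k r * symb gr l s = symb gr (k + l) (r * s) := by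
  rw [symb_of_mem gr hr, symb_of_mem gr hs, symb_of_mem gr hrs]
  exact gr.π_mul k l ⟨r, hr⟩ ⟨s, hs⟩ hrs

lemma symb_indep (n : ℕ) (f : ℕ → R) (hf : ∀ m, f m ∈ F m)
    (h : ∑ m ∈ Finset.range n, symb gr m (f m) = 0) :
    ∀ m < n, symb gr m (f m) = 0 := by
  have h' : ∑ m ∈ Finset.range n, gr.π m ⟨f m, hf m⟩ = 0 := by
    rw [← h]
    exact Finset.sum_congr rfl fun m _ => (symb_of_mem gr (hf m)).symm
  intro m hm
  rw [symb_of_mem gr (hf m)]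
  exact gr.indep n (fun m => ⟨f m, hf m⟩) h' m hm

lemma sum_symb_pad (n N : ℕ) (hnN : n ≤ N) (f : ℕ → R) :
    ∑ m ∈ Finset.range N, symb gr m (if m < n then f m else 0)
      = ∑ m ∈ Finset.range n, symb gr m (f m) := by
  classical
  have h : ∀ m ∈ Finset.range N,
      symb gr m (if m < n then f m else 0) = if m < n then symb gr m (f m) else 0 := by
    intro m _
    split
    · rfl
    · exact symb_zero gr m
  rw [Finset.sum_congr rfl h, ← Finset.sum_filter]
  congr 1
  ext m
  simp only [Finset.mem_filter, Finset.mem_range]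
  omega

/-- Every element of `B` is a finite sum of homogeneous symbols. -/
lemma symb_decompose (b : B) :
    ∃ (n : ℕ) (f : ℕ → R), (∀ m, f m ∈ F m) ∧ b = ∑ m ∈ Finset.range n, symb gr m (f m) := by
  classical
  have hb : b ∈ AddSubgroup.closure (⋃ k : ℕ, Set.range (gr.π k)) := by
    rw [gr.span]; trivial
  induction hb using AddSubgroup.closure_induction with
  | mem b hb =>
    obtain ⟨_, ⟨k, rfl⟩, x, rfl⟩ := hb
    refine ⟨k + 1, fun m => if m = k then (x : R) else 0, ?_, ?_⟩
    · intro m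
      by_cases hm : m = k
      · subst hm; simpa using x.2
      · simp only [if_neg hm]; exact zero_mem _
    · rw [Finset.sum_eq_single k]
      · simp [symb_of_mem gr x.2]
      · intro m _ hm; simp [hm, symb_zero gr]
      · intro hk; exact absurd (Finset.self_mem_range_succ k) hk
  | zero => exact ⟨0, 0, fun m => zero_mem _, by simp⟩
  | add x y hx hy ihx ihy =>
    obtain ⟨n, f, hf, rfl⟩ := ihx
    obtain ⟨n', f', hf', rfl⟩ := ihy
    refine ⟨max n n', fun m => (if m < n then f m else 0) + (if m < n' then f' m else 0),
      fun m => add_mem (by split <;> first | exact hf m | exact zero_mem _) (by split <;> first | exact hf' m | exact zero_mem _), ?_⟩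
    rw [← sum_symb_pad gr n (max n n') (le_max_left n n') f,
      ← sum_symb_pad gr n' (max n n') (le_max_right n n') f', ← Finset.sum_add_distrib]
    exact Finset.sum_congr rfl fun m _ =>
      (symb_add gr (by split <;> first | exact hf m | exact zero_mem _) (by split <;> first | exact hf' m | exact zero_mem _)).symm
  | neg x hx ihx =>
    obtain ⟨n, f, hf, rfl⟩ := ihx
    refine ⟨n, fun m => -f m, fun m => neg_mem (hf m), ?_⟩
    rw [← Finset.sum_neg_distrib]
    exact Finset.sum_congr rfl fun m _ => (symb_neg gr (hf m)).symm

/-- Extraction of the degree-`k` homogeneous component. -/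
lemma symb_extract {α : Type u} [DecidableEq ℕ] (s : Finset α) (d : α → ℕ) (z : α → R)
    (hz : ∀ j ∈ s, z j ∈ F (d j)) (k : ℕ) (y : R) (hy : y ∈ F k)
    (heq : symb gr k y = ∑ j ∈ s, symb gr (d j) (z j)) :
    y - ∑ j ∈ s.filter (fun j => d j = k), z j ∈ F (k + 1) := by
  classical
  set n := max k (s.sup d) + 1 with hn
  have hkn : k < n := Nat.lt_succ_of_le (le_max_left _ _)
  have hdn : ∀ j ∈ s, d j < n := fun j hj =>
    Nat.lt_succ_of_le (le_trans (Finset.le_sup hj) (le_max_right _ _))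
  set g : ℕ → R := fun m => ∑ j ∈ s.filter (fun j => d j = m), z j with hg
  have hgm : ∀ m, g m ∈ F m := by
    intro m
    refine sum_mem fun j hj => ?_
    obtain ⟨hjs, hjd⟩ := Finset.mem_filter.1 hj
    exact hjd ▸ hz j hjs
  have h1 : ∑ m ∈ Finset.range n, symb gr m (g m) = ∑ j ∈ s, symb gr (d j) (z j) := by
    rw [← Finset.sum_fiberwise_of_maps_to (fun j hj => Finset.mem_range.2 (hdn j hj))
      (fun j => symb gr (d j) (z j))]
    refine Finset.sum_congr rfl fun m _ => ?_
    rw [hg, symb_sum gr _ _ _ (fun j hj => (Finset.mem_filter.1 hj).2 ▸ hz j (Finset.mem_filter.1 hj).1)]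
    exact Finset.sum_congr rfl fun j hj => by rw [(Finset.mem_filter.1 hj).2]
  set f : ℕ → R := fun m => if m = k then g k - y else g m with hfdef
  have hfm : ∀ m, f m ∈ F m := by
    intro m
    by_cases hm : m = k
    · simp only [hfdef, if_pos hm]
      rw [hm]
      exact sub_mem (hgm k) hy
    · simpa [hfdef, hm] using hgm m
  have h2 : ∑ m ∈ Finset.range n, symb gr m (f m) = 0 := by
    have term : ∀ m ∈ Finset.range n,
        symb gr m (f m) = symb gr m (g m) + (if m = k then -(symb gr k y) else 0) := by
      intro m _
      by_cases hm : m = k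
      · rw [hm]
        have hfk : f k = g k - y := by simp [hfdef]
        rw [hfk, symb_sub gr (hgm k) hy, if_pos rfl, sub_eq_add_neg]
      · simp [hfdef, hm]
    rw [Finset.sum_congr rfl term, Finset.sum_add_distrib, h1, ← heq,
      Finset.sum_ite_eq' (Finset.range n) k (fun _ => -(symb gr k y)),
      if_pos (Finset.mem_range.2 hkn)]
    exact add_neg_cancel _
  have h3 := symb_indep gr n f hfm h2 k hkn
  have h4 : g k - y ∈ F (k + 1) := by
    rw [← symb_eq_zero_iff gr (sub_mem (hgm k) hy)]
    simpa [hfdef] using h3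
  have := neg_mem h4
  rw [neg_sub] at this
  exact this


lemma approx_step {ι : Type u} [Fintype ι]
    (hmul : ∀ (k l : ℕ) (x y : R), x ∈ F k → y ∈ F l → x * y ∈ F (k + l))
    (kk : ι → ℕ) (xx : ι → R) (hxF : ∀ i, xx i ∈ F (kk i)) (k : ℕ) (y : R) (hy : y ∈ F k)
    (hsp : symb gr k y ∈ Submodule.span B (Set.range fun i => symb gr (kk i) (xx i))) :
    ∃ a : ι → R, (∀ i, a i ∈ F (k - kk i)) ∧ (∀ i, k < kk i → a i = 0) ∧
      y - ∑ i, a i * xx i ∈ F (k + 1) := by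
  classical
  obtain ⟨b, hb⟩ := (Submodule.mem_span_range_iff_exists_fun B).1 hsp
  choose n f hf hbf using fun i => symb_decompose gr (b i)
  set N := Finset.univ.sup n with hN
  set g : ι → ℕ → R := fun i l => if l < n i then f i l else 0 with hgdef
  have hgF : ∀ i l, g i l ∈ F l := by
    intro i l
    rw [hgdef]
    dsimp only
    split
    · exact hf i l
    · exact zero_mem _
  have hbg : ∀ i, b i = ∑ l ∈ Finset.range N, symb gr l (g i l) := by
    intro i
    rw [hbf i, hgdef]
    exact (sum_symb_pad gr (n i) N (Finset.le_sup (Finset.mem_univ i)) (f i)).symm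
  have heq : symb gr k y = ∑ p ∈ Finset.univ ×ˢ Finset.range N,
      symb gr (p.2 + kk p.1) (g p.1 p.2 * xx p.1) := by
    rw [← hb, Finset.sum_product]
    refine Finset.sum_congr rfl fun i _ => ?_
    rw [smul_eq_mul, hbg i, Finset.sum_mul]
    exact Finset.sum_congr rfl fun l _ =>
      symb_mul gr (hgF i l) (hxF i) (hmul _ _ _ _ (hgF i l) (hxF i))
  have hz : ∀ p ∈ Finset.univ ×ˢ Finset.range N,
      g p.1 p.2 * xx p.1 ∈ F (p.2 + kk p.1) :=
    fun p _ => hmul _ _ _ _ (hgF p.1 p.2) (hxF p.1)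
  have hext := symb_extract gr (Finset.univ ×ˢ Finset.range N)
    (fun p => p.2 + kk p.1) (fun p => g p.1 p.2 * xx p.1) hz k y hy heq
  set a : ι → R := fun i => ∑ l ∈ (Finset.range N).filter (fun l => l + kk i = k), g i l
    with ha
  refine ⟨a, ?_, ?_, ?_⟩
  · intro i
    refine sum_mem fun l hl => ?_
    obtain ⟨-, hlk⟩ := Finset.mem_filter.1 hl
    have hl' : l = k - kk i := by omega
    exact hl' ▸ hgF i l
  · intro i hki
    refine Finset.sum_eq_zero fun l hl => ?_
    obtain ⟨-, hlk⟩ := Finset.mem_filter.1 hl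
    exact absurd hlk (by omega)
  · have hsum : ∑ p ∈ (Finset.univ ×ˢ Finset.range N).filter
        (fun p => p.2 + kk p.1 = k), g p.1 p.2 * xx p.1 = ∑ i, a i * xx i := by
      rw [Finset.sum_filter, Finset.sum_product]
      refine Finset.sum_congr rfl fun i _ => ?_
      rw [ha]
      dsimp only
      rw [Finset.sum_filter, Finset.sum_mul]
      refine Finset.sum_congr rfl fun l _ => ?_
      split
      · rfl
      · rw [zero_mul]
    rw [← hsum]
    exact hext

end aux


/-- a complete (decreasing, exhaustive, separated) filtered ring whose
associated graded ring is left Noetherian is left Noetherian. -/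
theorem noetherian_of_graded_noetherian (R : Type u) [Ring R] (F : ℕ → AddSubgroup R)
    (hF0 : F 0 = ⊤) (hdec : ∀ k : ℕ, F (k + 1) ≤ F k)
    (hmul : ∀ (k l : ℕ) (x y : R), x ∈ F k → y ∈ F l → x * y ∈ F (k + l))
    (hsep : ∀ r : R, (∀ k : ℕ, r ∈ F k) → r = 0)
    (hcomplete : ∀ c : ℕ → R, (∀ k : ℕ, c (k + 1) - c k ∈ F k) →
      ∃ x : R, ∀ k : ℕ, x - c k ∈ F k)
    (B : Type u) [Ring B] (gr : IsAssociatedGraded R F B)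
    (hB : IsNoetherianRing B) :
    IsNoetherianRing R := by
  classical
  have Fle : ∀ {m n : ℕ}, m ≤ n → F n ≤ F m := fun {m n} h => antitone_nat_of_succ_le hdec h
  have hF0' : ∀ r : R, r ∈ F 0 := fun r => by rw [hF0]; trivial
  rw [isNoetherianRing_iff_ideal_fg]
  intro I
  -- the set of symbols of elements of I
  set S : Set B := {b | ∃ (k : ℕ) (y : R) (h : y ∈ F k), y ∈ I ∧ gr.π k ⟨y, h⟩ = b} with hS
  set J : Submodule B B := Submodule.span B S with hJ
  have hsymbJ : ∀ (k : ℕ) (y : R) (hy : y ∈ F k), y ∈ I → symb gr k y ∈ J :=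
    fun k y hy hyI => Submodule.subset_span ⟨k, y, hy, hyI, (symb_of_mem gr hy).symm⟩
  -- J is finitely generated; pick a finite generating subset V of S
  obtain ⟨T, hT⟩ := (IsNoetherian.noetherian J : J.FG)
  have hTJ : ∀ t : ↥T, (t : B) ∈ Submodule.span B S := by
    intro t
    rw [← hJ, ← hT]
    exact Submodule.subset_span t.2
  choose U hUS hUmem using fun t : ↥T => Submodule.mem_span_finite_of_mem_span (hTJ t)
  set V : Finset B := Finset.univ.biUnion U with hV
  have hVS : (↑V : Set B) ⊆ S := by
    intro v hv
    rw [hV] at hv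
    simp only [Finset.coe_biUnion, Set.mem_iUnion, Finset.mem_coe, Finset.mem_univ,
      exists_true_left] at hv
    obtain ⟨t, hvt⟩ := hv
    exact hUS t hvt
  have hJV : J ≤ Submodule.span B (↑V : Set B) := by
    conv_lhs => rw [← hT]
    refine Submodule.span_le.2 fun t ht => ?_
    refine Submodule.span_mono ?_ (hUmem ⟨t, ht⟩)
    intro u hu
    rw [hV]
    simp only [Finset.coe_biUnion, Set.mem_iUnion, Finset.mem_coe, Finset.mem_univ,
      exists_true_left]
    exact ⟨⟨t, ht⟩, hu⟩
  -- choose generator data for V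
  have hVdata : ∀ v : ↥V, ∃ (k : ℕ) (y : R) (h : y ∈ F k), y ∈ I ∧ gr.π k ⟨y, h⟩ = (v : B) :=
    fun v => hVS v.2
  choose kk xx hxF hxI hπv using hVdata
  have hsymbv : ∀ v : ↥V, symb gr (kk v) (xx v) = (v : B) :=
    fun v => (symb_of_mem gr (hxF v)).trans (hπv v)
  have hrange : (Set.range fun v : ↥V => symb gr (kk v) (xx v)) = (↑V : Set B) := by
    ext b
    simp only [Set.mem_range, Finset.mem_coe]
    constructor
    · rintro ⟨v, rfl⟩
      rw [hsymbv]
      exact v.2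
    · intro hb
      exact ⟨⟨b, hb⟩, hsymbv ⟨b, hb⟩⟩
  have hspan : ∀ (k : ℕ) (y : R), y ∈ F k → y ∈ I →
      symb gr k y ∈ Submodule.span B (Set.range fun v : ↥V => symb gr (kk v) (xx v)) := by
    intro k y hy hyI
    rw [hrange]
    exact hJV (hsymbJ k y hy hyI)
  -- approximation step with ideal membership
  have key : ∀ (k : ℕ) (y : R), y ∈ F k → y ∈ I → ∃ a : ↥V → R,
      (∀ v, a v ∈ F (k - kk v)) ∧ (∀ v, k < kk v → a v = 0) ∧
      y - ∑ v, a v * xx v ∈ F (k + 1) ∧ y - ∑ v, a v * xx v ∈ I := by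
    intro k y hy hyI
    obtain ⟨a, h1, h2, h3⟩ := approx_step gr hmul kk xx hxF k y hy (hspan k y hy hyI)
    refine ⟨a, h1, h2, h3, I.sub_mem hyI (Submodule.sum_mem _ fun v _ => ?_)⟩
    rw [← smul_eq_mul]
    exact I.smul_mem (a v) (hxI v)
  choose! A hA1 hA2 hA3 hA4 using key
  -- show I is spanned by the xx's
  suffices hIs : I = Submodule.span R (Set.range xx) by
    exact hIs ▸ Submodule.fg_def.2 ⟨Set.range xx, Set.finite_range xx, rfl⟩
  refine le_antisymm ?_ (Submodule.span_le.2 fun r ⟨v, hv⟩ => hv ▸ hxI v)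
  intro x hxmem
  -- successive approximations
  set Y : ℕ → R := fun k => Nat.rec x (fun k y => y - ∑ v, A k y v * xx v) k with hYdef
  have hYsucc : ∀ k, Y (k + 1) = Y k - ∑ v, A k (Y k) v * xx v := fun k => rfl
  have hYmem : ∀ k, Y k ∈ F k ∧ Y k ∈ I := by
    intro k
    induction k with
    | zero => exact ⟨hF0' x, hxmem⟩
    | succ k ih =>
      rw [hYsucc]
      exact ⟨hA3 k (Y k) ih.1 ih.2, hA4 k (Y k) ih.1 ih.2⟩
  set a : ℕ → ↥V → R := fun k => A k (Y k) with hadef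
  have ha1 : ∀ k v, a k v ∈ F (k - kk v) := fun k v => hA1 k (Y k) (hYmem k).1 (hYmem k).2 v
  have tele : ∀ M, x - Y M = ∑ k ∈ Finset.range M, ∑ v, a k v * xx v := by
    intro M
    induction M with
    | zero => simp [hYdef]
    | succ M ih =>
      rw [hYsucc, Finset.sum_range_succ, ← ih, hadef]
      abel
  -- limits of the coefficient sequences
  have hlim : ∀ v : ↥V, ∃ L : R, ∀ m, L - ∑ k ∈ Finset.range (m + kk v), a k v ∈ F m := by
    intro v
    refine hcomplete (fun m => ∑ k ∈ Finset.range (m + kk v), a k v) fun m => ?_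
    show (∑ k ∈ Finset.range (m + 1 + kk v), a k v) - (∑ k ∈ Finset.range (m + kk v), a k v) ∈ F m
    have he : m + 1 + kk v = (m + kk v) + 1 := by omega
    rw [he, Finset.sum_range_succ, add_sub_cancel_left]
    have := ha1 (m + kk v) v
    rwa [Nat.add_sub_cancel] at this
  choose L hL using hlim
  have hfin : ∀ N, x - ∑ v, L v * xx v ∈ F N := by
    intro N
    set M := N + Finset.univ.sup (fun v : ↥V => kk v) with hM
    have hMk : ∀ v : ↥V, N + kk v ≤ M := by
      intro v
      have := Finset.le_sup (f := fun v : ↥V => kk v) (Finset.mem_univ v)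
      omega
    have e : x - ∑ v, L v * xx v
        = Y M + ∑ v, ((∑ k ∈ Finset.range M, a k v) - L v) * xx v := by
      have e1 : ∑ v, ((∑ k ∈ Finset.range M, a k v) - L v) * xx v
          = ∑ v, (∑ k ∈ Finset.range M, a k v) * xx v - ∑ v, L v * xx v := by
        rw [← Finset.sum_sub_distrib]
        exact Finset.sum_congr rfl fun v _ => sub_mul _ _ _
      have e2 : ∑ v, (∑ k ∈ Finset.range M, a k v) * xx v
          = ∑ k ∈ Finset.range M, ∑ v, a k v * xx v := by
        rw [Finset.sum_comm]
        exact Finset.sum_congr rfl fun v _ => Finset.sum_mul _ _ _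
      rw [e1, e2, ← tele M]
      abel
    rw [e]
    have hNM : N ≤ M := hM ▸ Nat.le_add_right N _
    refine add_mem (Fle hNM (hYmem M).1) (sum_mem fun v _ => ?_)
    have hkvM : kk v ≤ M := le_trans (Nat.le_add_left _ _) (hMk v)
    have h5 : M - kk v + kk v = M := Nat.sub_add_cancel hkvM
    have h6 : (∑ k ∈ Finset.range M, a k v) - L v ∈ F (M - kk v) := by
      have h6' := neg_mem (hL v (M - kk v))
      rwa [neg_sub, h5] at h6'
    have h7 : N ≤ M - kk v := Nat.le_sub_of_add_le (hMk v)
    have h8 := hmul N 0 _ (xx v) (Fle h7 h6) (hF0' (xx v))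
    rwa [Nat.add_zero] at h8
  have hzero : x - ∑ v, L v * xx v = 0 := hsep _ (fun k => hfin k)
  have hx_eq : x = ∑ v, L v * xx v := by
    have := sub_eq_zero.1 hzero
    exact this
  rw [hx_eq]
  refine Submodule.sum_mem _ fun v _ => ?_
  rw [← smul_eq_mul]
  exact Submodule.smul_mem _ (L v) (Submodule.subset_span ⟨v, rfl⟩)
end
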